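/- Let Q0, Q1 be left-continuous quantile functions of cdfs F0, F1 and 0 ≤ a < b ≤ 1. For Y0 = Q0(U), U ~ Uniform(0,1), and Y1 with cdf F1 under any coupling, ∫_a^b max(Q0(u) - Q1(1-b+u), 0) du ≤ E[max(Y0 - Y1, 0) · 1{a < U < b}] ≤ ∫_a^b max(Q0(u) - Q1(b-u), 0) du. -/

import Mathlib

open MeasureTheory Set Filter Function
open scoped ENNReal

noncomputable section

/-- `F` is a cumulative distribution function. -/
def IsCDF (F : ℝ → ℝ) : Prop :=
  Monotone F ∧ (∀ y, ContinuousWithinAt F (Set.Ici y) y) ∧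
    Tendsto F atBot (nhds 0) ∧ Tendsto F atTop (nhds 1)

lemma cdf_nonneg {F : ℝ → ℝ} (hF : IsCDF F) (t : ℝ) : 0 ≤ F t := by
  refine le_of_tendsto hF.2.2.1 ?_
  filter_upwards [eventually_le_atBot t] with y hy using hF.1 hy

lemma cdf_le_one {F : ℝ → ℝ} (hF : IsCDF F) (t : ℝ) : F t ≤ 1 := by
  refine ge_of_tendsto hF.2.2.2 ?_
  filter_upwards [eventually_ge_atTop t] with y hy using hF.1 hy

lemma quantile_galois {F : ℝ → ℝ} (hF : IsCDF F) {u : ℝ} (hu0 : 0 < u) (hu1 : u < 1)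
    (t : ℝ) : sInf {y : ℝ | u ≤ F y} ≤ t ↔ u ≤ F t := by
  set S : Set ℝ := {y : ℝ | u ≤ F y} with hS
  have hne : S.Nonempty := by
    have h1 : ∀ᶠ y in atTop, u < F y := hF.2.2.2.eventually (eventually_gt_nhds hu1)
    obtain ⟨y, hy⟩ := h1.exists
    exact ⟨y, hy.le⟩
  have hbdd : BddBelow S := by
    have h0 : ∀ᶠ y in atBot, F y < u := hF.2.2.1.eventually (eventually_lt_nhds hu0)
    obtain ⟨y0, hy0⟩ := h0.exists
    refine ⟨y0, fun y hy => ?_⟩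
    by_contra hc
    exact absurd (le_trans hy (hF.1 (le_of_not_ge hc))) (not_le_of_gt hy0)
  have hmem : sInf S ∈ S := by
    set c := sInf S
    have hclos : c ∈ closure S := csInf_mem_closure hne hbdd
    have hsub : S ⊆ Ici c := fun y hy => csInf_le hbdd hy
    have hcw : ContinuousWithinAt F S c := (hF.2.1 c).mono hsub
    have hne' : (nhdsWithin c S).NeBot := mem_closure_iff_nhdsWithin_neBot.mp hclos
    exact ge_of_tendsto hcw (eventually_nhdsWithin_of_forall (fun y hy => hy))
  exact ⟨fun h => le_trans hmem (hF.1 h), fun h => csInf_le hbdd h⟩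

lemma ofReal_max_zero (r : ℝ) : ENNReal.ofReal (max r 0) = ENNReal.ofReal r := by
  rcases le_total r 0 with h | h
  · rw [max_eq_right h, ENNReal.ofReal_zero, ENNReal.ofReal_of_nonpos h]
  · rw [max_eq_left h]

theorem subgroup_negative_part_bounds
    {Ω : Type*} [MeasurableSpace Ω] (μ : Measure Ω) [IsProbabilityMeasure μ]
    (U Y1 : Ω → ℝ) (F0 F1 Q0 Q1 : ℝ → ℝ)
    (hF0 : IsCDF F0) (hF1 : IsCDF F1)
    (hQ0 : ∀ u, Q0 u = sInf {y : ℝ | u ≤ F0 y})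
    (hQ1 : ∀ u, Q1 u = sInf {y : ℝ | u ≤ F1 y})
    (hU : Measurable U) (hUlaw : μ.map U = volume.restrict (Set.Ioo (0:ℝ) 1))
    (hY1 : Measurable Y1) (hY1law : ∀ y, (μ {ω | Y1 ω ≤ y}).toReal = F1 y)
    (a b : ℝ) (ha : 0 ≤ a) (hab : a < b) (hb : b ≤ 1)
    (hint : IntegrableOn (fun ω => max (Q0 (U ω) - Y1 ω) 0) {ω | a < U ω ∧ U ω < b} μ)
    (hintL : IntervalIntegrable (fun u => max (Q0 u - Q1 (1 - b + u)) 0) volume a b)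
    (hintU : IntervalIntegrable (fun u => max (Q0 u - Q1 (b - u)) 0) volume a b) :
    (∫ u in a..b, max (Q0 u - Q1 (1 - b + u)) 0) ≤
        (∫ ω in {ω | a < U ω ∧ U ω < b}, max (Q0 (U ω) - Y1 ω) 0 ∂μ) ∧
      (∫ ω in {ω | a < U ω ∧ U ω < b}, max (Q0 (U ω) - Y1 ω) 0 ∂μ) ≤
        ∫ u in a..b, max (Q0 u - Q1 (b - u)) 0 := by
  have hF0m : Measurable F0 := hF0.1.measurable
  have hF1m : Measurable F1 := hF1.1.measurable
  -- Galois connections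
  have hG0 : ∀ {u : ℝ}, 0 < u → u < 1 → ∀ t : ℝ, (Q0 u ≤ t ↔ u ≤ F0 t) := by
    intro u hu0 hu1 t; rw [hQ0]; exact quantile_galois hF0 hu0 hu1 t
  have hG1 : ∀ {u : ℝ}, 0 < u → u < 1 → ∀ t : ℝ, (Q1 u ≤ t ↔ u ≤ F1 t) := by
    intro u hu0 hu1 t; rw [hQ1]; exact quantile_galois hF1 hu0 hu1 t
  have hG0' : ∀ {u : ℝ}, 0 < u → u < 1 → ∀ t : ℝ, (t < Q0 u ↔ F0 t < u) := by
    intro u hu0 hu1 t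
    rw [← not_le, ← not_le, not_iff_not]
    exact hG0 hu0 hu1 t
  set A : Set Ω := {ω | a < U ω ∧ U ω < b} with hAdef
  have hA : MeasurableSet A := by
    have : A = U ⁻¹' (Ioo a b) := rfl
    rw [this]; exact hU measurableSet_Ioo
  -- the middle quantity as a lintegral
  set I : ℝ≥0∞ := ∫⁻ ω in A, ENNReal.ofReal (max (Q0 (U ω) - Y1 ω) 0) ∂μ with hIdef
  -- the product set
  set E : Set (Ω × ℝ) := {p | Y1 p.1 ≤ p.2 ∧ F0 p.2 < U p.1} with hEdef
  have hE : MeasurableSet E := by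
    refine MeasurableSet.inter ?_ ?_
    · exact measurableSet_le (hY1.comp measurable_fst) measurable_snd
    · exact measurableSet_lt (hF0m.comp measurable_snd) (hU.comp measurable_fst)
  have hUmem : ∀ ω ∈ A, 0 < U ω ∧ U ω < 1 := fun ω hω =>
    ⟨lt_of_le_of_lt ha hω.1, lt_of_lt_of_le hω.2 hb⟩
  -- Step A1 : I = ∫⁻ ω in A, volume (slice of E)
  have stepA1 : I = ∫⁻ ω in A, volume (Prod.mk ω ⁻¹' E) ∂μ := by
    refine setLIntegral_congr_fun hA (fun ω hω => ?_)
    obtain ⟨h0, h1⟩ := hUmem ω hω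
    have hslice : Prod.mk ω ⁻¹' E = Ico (Y1 ω) (Q0 (U ω)) := by
      ext t
      simp only [hEdef, mem_preimage, mem_setOf_eq, mem_Ico]
      exact and_congr_right fun _ => (hG0' h0 h1 t).symm
    rw [hslice, Real.volume_Ico, ofReal_max_zero]
  -- Step A2 : Fubini for the product measure
  have stepA2 : ∫⁻ ω in A, volume (Prod.mk ω ⁻¹' E) ∂μ
      = ∫⁻ t, (μ.restrict A) ((fun ω => (ω, t)) ⁻¹' E) ∂volume := by
    rw [← Measure.prod_apply hE, Measure.prod_apply_symm hE]
  -- the two families of events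
  have hPt : ∀ t : ℝ, μ {ω | max a (F0 t) < U ω ∧ U ω < b}
      = ENNReal.ofReal (b - max a (F0 t)) := by
    intro t
    have h1 : {ω | max a (F0 t) < U ω ∧ U ω < b} = U ⁻¹' (Ioo (max a (F0 t)) b) := rfl
    rw [h1, ← Measure.map_apply hU measurableSet_Ioo, hUlaw,
      Measure.restrict_apply measurableSet_Ioo]
    have h2 : Ioo (max a (F0 t)) b ∩ Ioo 0 1 = Ioo (max a (F0 t)) b := by
      refine inter_eq_left.mpr fun x hx => ?_
      exact ⟨lt_of_le_of_lt (le_trans ha (le_max_left _ _)) hx.1, lt_of_lt_of_le hx.2 hb⟩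
    rw [h2, Real.volume_Ioo]
  have hQt : ∀ t : ℝ, μ {ω | Y1 ω ≤ t} = ENNReal.ofReal (F1 t) := by
    intro t
    rw [← hY1law t, ENNReal.ofReal_toReal (measure_ne_top μ _)]
  have hQtm : ∀ t : ℝ, MeasurableSet {ω | Y1 ω ≤ t} := fun t => hY1 measurableSet_Iic
  -- step A3 : identify the t-slices
  have stepA3 : ∀ t : ℝ, (μ.restrict A) ((fun ω => (ω, t)) ⁻¹' E)
      = μ ({ω | max a (F0 t) < U ω ∧ U ω < b} ∩ {ω | Y1 ω ≤ t}) := by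
    intro t
    have hm : MeasurableSet ((fun ω => (ω, t)) ⁻¹' E) :=
      measurable_prodMk_right hE
    rw [Measure.restrict_apply hm]
    congr 1
    ext ω
    simp only [hEdef, mem_preimage, mem_setOf_eq, mem_inter_iff, hAdef, max_lt_iff]
    tauto
  -- Fréchet–Hoeffding bounds pointwise in t
  have frechetU : ∀ t : ℝ, μ ({ω | max a (F0 t) < U ω ∧ U ω < b} ∩ {ω | Y1 ω ≤ t})
      ≤ ENNReal.ofReal (min (b - max a (F0 t)) (F1 t)) := by
    intro t
    rcases le_total (b - max a (F0 t)) (F1 t) with h | h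
    · rw [min_eq_left h, ← hPt t]; exact measure_mono inter_subset_left
    · rw [min_eq_right h, ← hQt t]; exact measure_mono inter_subset_right
  have frechetL : ∀ t : ℝ, ENNReal.ofReal (b - max a (F0 t) + F1 t - 1)
      ≤ μ ({ω | max a (F0 t) < U ω ∧ U ω < b} ∩ {ω | Y1 ω ≤ t}) := by
    intro t
    set Pt := {ω | max a (F0 t) < U ω ∧ U ω < b} with hPtdef
    set Qt := {ω | Y1 ω ≤ t} with hQtdef
    rcases le_or_gt (b - max a (F0 t) + F1 t - 1) 0 with h | h
    · rw [ENNReal.ofReal_of_nonpos h]; exact zero_le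
    · have hc : 0 ≤ b - max a (F0 t) := by linarith [cdf_le_one hF1 t]
      have key : μ Pt + μ Qt ≤ μ (Pt ∩ Qt) + 1 := by
        calc μ Pt + μ Qt = μ (Pt ∪ Qt) + μ (Pt ∩ Qt) :=
              (measure_union_add_inter Pt (hQtm t)).symm
          _ ≤ 1 + μ (Pt ∩ Qt) := add_le_add_left prob_le_one _
          _ = μ (Pt ∩ Qt) + 1 := add_comm _ _
      have h2 : ENNReal.ofReal (b - max a (F0 t) + F1 t - 1) + 1 ≤ μ (Pt ∩ Qt) + 1 := by
        calc ENNReal.ofReal (b - max a (F0 t) + F1 t - 1) + 1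
            = ENNReal.ofReal ((b - max a (F0 t) + F1 t - 1) + 1) := by
              rw [ENNReal.ofReal_add h.le zero_le_one, ENNReal.ofReal_one]
          _ = ENNReal.ofReal (b - max a (F0 t) + F1 t) := by congr 1; ring
          _ = ENNReal.ofReal (b - max a (F0 t)) + ENNReal.ofReal (F1 t) :=
              ENNReal.ofReal_add hc (cdf_nonneg hF1 t)
          _ = μ Pt + μ Qt := by rw [hPt t, hQt t]
          _ ≤ μ (Pt ∩ Qt) + 1 := key
      exact (ENNReal.add_le_add_iff_right ENNReal.one_ne_top).mp h2
  -- the whole middle quantity, after Fubini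
  have hswap : I = ∫⁻ t, μ ({ω | max a (F0 t) < U ω ∧ U ω < b} ∩ {ω | Y1 ω ≤ t}) ∂volume := by
    rw [stepA1, stepA2]; exact lintegral_congr stepA3
  -- upper RHS as a t-integral
  have stepE1 : ∫⁻ u in Ioo a b, ENNReal.ofReal (max (Q0 u - Q1 (b - u)) 0) ∂volume
      = ∫⁻ t, ENNReal.ofReal (min (b - max a (F0 t)) (F1 t)) ∂volume := by
    set E' : Set (ℝ × ℝ) := {p | b - p.1 ≤ F1 p.2 ∧ F0 p.2 < p.1} with hE'def
    have hE' : MeasurableSet E' := by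
      refine MeasurableSet.inter ?_ ?_
      · exact measurableSet_le (measurable_const.sub measurable_fst) (hF1m.comp measurable_snd)
      · exact measurableSet_lt (hF0m.comp measurable_snd) measurable_fst
    have h1 : ∫⁻ u in Ioo a b, ENNReal.ofReal (max (Q0 u - Q1 (b - u)) 0) ∂volume
        = ∫⁻ u in Ioo a b, volume (Prod.mk u ⁻¹' E') ∂volume := by
      refine setLIntegral_congr_fun measurableSet_Ioo (fun u hu => ?_)
      have hu0 : 0 < u := lt_of_le_of_lt ha hu.1
      have hu1 : u < 1 := lt_of_lt_of_le hu.2 hb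
      have hv0 : 0 < b - u := by linarith [hu.2]
      have hv1 : b - u < 1 := by linarith [hu.1]
      have hslice : Prod.mk u ⁻¹' E' = Ico (Q1 (b - u)) (Q0 u) := by
        ext t
        simp only [hE'def, mem_preimage, mem_setOf_eq, mem_Ico]
        constructor
        · rintro ⟨ht1, ht2⟩; exact ⟨(hG1 hv0 hv1 t).mpr ht1, (hG0' hu0 hu1 t).mpr ht2⟩
        · rintro ⟨ht1, ht2⟩; exact ⟨(hG1 hv0 hv1 t).mp ht1, (hG0' hu0 hu1 t).mp ht2⟩
      rw [hslice, Real.volume_Ico, ofReal_max_zero]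
    rw [h1, ← Measure.prod_apply hE', Measure.prod_apply_symm hE']
    refine lintegral_congr fun t => ?_
    have hsm : MeasurableSet ((fun u => (u, t)) ⁻¹' E') := measurable_prodMk_right hE'
    rw [Measure.restrict_apply hsm]
    have hset : (fun u => (u, t)) ⁻¹' E' ∩ Ioo a b
        = Ioo (max a (F0 t)) b ∩ Ici (b - F1 t) := by
      ext u
      simp only [hE'def, mem_preimage, mem_setOf_eq, mem_inter_iff, mem_Ioo, mem_Ici, max_lt_iff]
      constructor
      · rintro ⟨⟨h1', h2'⟩, h3', h4'⟩; exact ⟨⟨⟨h3', h2'⟩, h4'⟩, by linarith⟩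
      · rintro ⟨⟨⟨h3', h2'⟩, h4'⟩, h5'⟩; exact ⟨⟨by linarith, h2'⟩, h3', h4'⟩
    rw [hset]
    rcases le_or_gt (b - F1 t) (max a (F0 t)) with h | h
    · have hss : Ioo (max a (F0 t)) b ∩ Ici (b - F1 t) = Ioo (max a (F0 t)) b :=
        inter_eq_left.mpr fun x hx => le_trans h hx.1.le
      rw [hss, Real.volume_Ioo, min_eq_left (by linarith)]
    · have hss : Ioo (max a (F0 t)) b ∩ Ici (b - F1 t) = Ico (b - F1 t) b := by
        ext x; simp only [mem_inter_iff, mem_Ioo, mem_Ici, mem_Ico]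
        constructor
        · rintro ⟨⟨h1', h2'⟩, h3'⟩; exact ⟨h3', h2'⟩
        · rintro ⟨h3', h2'⟩; exact ⟨⟨lt_of_lt_of_le h h3', h2'⟩, h3'⟩
      rw [hss, Real.volume_Ico, min_eq_right (by linarith)]
      congr 1; ring
  -- lower RHS as a t-integral
  have stepE2 : ∫⁻ u in Ioo a b, ENNReal.ofReal (max (Q0 u - Q1 (1 - b + u)) 0) ∂volume
      = ∫⁻ t, ENNReal.ofReal (b - max a (F0 t) + F1 t - 1) ∂volume := by
    set E'' : Set (ℝ × ℝ) := {p | 1 - b + p.1 ≤ F1 p.2 ∧ F0 p.2 < p.1} with hE''def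
    have hE'' : MeasurableSet E'' := by
      refine MeasurableSet.inter ?_ ?_
      · exact measurableSet_le (measurable_const.add measurable_fst) (hF1m.comp measurable_snd)
      · exact measurableSet_lt (hF0m.comp measurable_snd) measurable_fst
    have h1 : ∫⁻ u in Ioo a b, ENNReal.ofReal (max (Q0 u - Q1 (1 - b + u)) 0) ∂volume
        = ∫⁻ u in Ioo a b, volume (Prod.mk u ⁻¹' E'') ∂volume := by
      refine setLIntegral_congr_fun measurableSet_Ioo (fun u hu => ?_)
      have hu0 : 0 < u := lt_of_le_of_lt ha hu.1
      have hu1 : u < 1 := lt_of_lt_of_le hu.2 hb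
      have hv0 : 0 < 1 - b + u := by linarith [hu.1]
      have hv1 : 1 - b + u < 1 := by linarith [hu.2]
      have hslice : Prod.mk u ⁻¹' E'' = Ico (Q1 (1 - b + u)) (Q0 u) := by
        ext t
        simp only [hE''def, mem_preimage, mem_setOf_eq, mem_Ico]
        constructor
        · rintro ⟨ht1, ht2⟩; exact ⟨(hG1 hv0 hv1 t).mpr ht1, (hG0' hu0 hu1 t).mpr ht2⟩
        · rintro ⟨ht1, ht2⟩; exact ⟨(hG1 hv0 hv1 t).mp ht1, (hG0' hu0 hu1 t).mp ht2⟩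
      rw [hslice, Real.volume_Ico, ofReal_max_zero]
    rw [h1, ← Measure.prod_apply hE'', Measure.prod_apply_symm hE'']
    refine lintegral_congr fun t => ?_
    have hsm : MeasurableSet ((fun u => (u, t)) ⁻¹' E'') := measurable_prodMk_right hE''
    rw [Measure.restrict_apply hsm]
    have hset : (fun u => (u, t)) ⁻¹' E'' ∩ Ioo a b
        = Ioo (max a (F0 t)) b ∩ Iic (b - 1 + F1 t) := by
      ext u
      simp only [hE''def, mem_preimage, mem_setOf_eq, mem_inter_iff, mem_Ioo, mem_Iic, max_lt_iff]
      constructor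
      · rintro ⟨⟨h1', h2'⟩, h3', h4'⟩; exact ⟨⟨⟨h3', h2'⟩, h4'⟩, by linarith⟩
      · rintro ⟨⟨⟨h3', h2'⟩, h4'⟩, h5'⟩; exact ⟨⟨by linarith, h2'⟩, h3', h4'⟩
    rw [hset]
    rcases lt_or_ge (b - 1 + F1 t) b with h | h
    · have hss : Ioo (max a (F0 t)) b ∩ Iic (b - 1 + F1 t)
          = Ioc (max a (F0 t)) (b - 1 + F1 t) := by
        ext x; simp only [mem_inter_iff, mem_Ioo, mem_Iic, mem_Ioc]
        constructor
        · rintro ⟨⟨h1', h2'⟩, h3'⟩; exact ⟨h1', h3'⟩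
        · rintro ⟨h1', h3'⟩; exact ⟨⟨h1', lt_of_le_of_lt h3' h⟩, h3'⟩
      rw [hss, Real.volume_Ioc]
      congr 1; ring
    · have hF1t : F1 t = 1 := le_antisymm (cdf_le_one hF1 t) (by linarith)
      have hss : Ioo (max a (F0 t)) b ∩ Iic (b - 1 + F1 t) = Ioo (max a (F0 t)) b :=
        inter_eq_left.mpr fun x hx => le_trans hx.2.le h
      rw [hss, Real.volume_Ioo]
      congr 1; rw [hF1t]; ring
  -- convert interval integrals to lintegrals
  have hIoo : volume.restrict (Ioo a b) = volume.restrict (Ioc a b) :=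
    Measure.restrict_congr_set Ioo_ae_eq_Ioc
  have hRU : ENNReal.ofReal (∫ u in a..b, max (Q0 u - Q1 (b - u)) 0)
      = ∫⁻ u in Ioo a b, ENNReal.ofReal (max (Q0 u - Q1 (b - u)) 0) ∂volume := by
    rw [intervalIntegral.integral_of_le hab.le,
      ofReal_integral_eq_lintegral_ofReal hintU.1 (ae_of_all _ fun u => le_max_right _ _), hIoo]
  have hRL : ENNReal.ofReal (∫ u in a..b, max (Q0 u - Q1 (1 - b + u)) 0)
      = ∫⁻ u in Ioo a b, ENNReal.ofReal (max (Q0 u - Q1 (1 - b + u)) 0) ∂volume := by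
    rw [intervalIntegral.integral_of_le hab.le,
      ofReal_integral_eq_lintegral_ofReal hintL.1 (ae_of_all _ fun u => le_max_right _ _), hIoo]
  -- chain of inequalities
  have hIle : I ≤ ENNReal.ofReal (∫ u in a..b, max (Q0 u - Q1 (b - u)) 0) := by
    rw [hRU, stepE1, hswap]
    exact lintegral_mono frechetU
  have hIge : ENNReal.ofReal (∫ u in a..b, max (Q0 u - Q1 (1 - b + u)) 0) ≤ I := by
    rw [hRL, stepE2, hswap]
    exact lintegral_mono frechetL
  have hIne : I ≠ ⊤ := ne_top_of_le_ne_top ENNReal.ofReal_ne_top hIle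
  have hbochner : (∫ ω in A, max (Q0 (U ω) - Y1 ω) 0 ∂μ) = I.toReal := by
    have hb1 : (0 : Ω → ℝ) ≤ᵐ[μ.restrict A] fun ω => max (Q0 (U ω) - Y1 ω) 0 :=
      ae_of_all _ fun ω => le_max_right _ _
    rw [integral_eq_lintegral_of_nonneg_ae hb1 hint.aestronglyMeasurable]
  constructor
  · rw [hbochner]
    exact (ENNReal.ofReal_le_iff_le_toReal hIne).mp hIge
  · rw [hbochner]
    exact ENNReal.toReal_le_of_le_ofReal
      (intervalIntegral.integral_nonneg hab.le fun u _ => le_max_right _ _) hIle
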